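/- Intertwining identity for the extremal integral-transform kernel: Fix M > 0 and parameters s ∈ ℝ, α, β, γ, L ∈ ℂ, and set A := −2γ/M. Then for all x, r ∈ ℝ, the kernel K(x, r) := exp(A(x−M)(r−M)) satisfies 𝒯̃_x K(x, r) = 𝒯_r K(x, r), where 𝒯̃_x acts on K as a function of x (with r fixed) and 𝒯_r acts on K as a function of r (with x fixed). -/

import Mathlib

open Real Complex Filter Set MeasureTheory

noncomputable section

/-- The double confluent Heun operator
`𝒯_r = (r−M)² d²/dr² + 2[(α−s+1)(r−M) − β + γ(r−M)²] d/dr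
  + (α − 2s − 2sα − L) + 2γ(1−2s)(r−M)`. -/
def THeun (M s : ℝ) (α β γ L : ℂ) (f : ℝ → ℂ) (r : ℝ) : ℂ :=
  ((r : ℂ) - (M : ℂ)) ^ 2 * deriv (deriv f) r
    + 2 * ((α - (s : ℂ) + 1) * ((r : ℂ) - (M : ℂ)) - β + γ * ((r : ℂ) - (M : ℂ)) ^ 2) *
      deriv f r
    + (α - 2 * (s : ℂ) - 2 * (s : ℂ) * α - L
        + 2 * γ * (1 - 2 * (s : ℂ)) * ((r : ℂ) - (M : ℂ))) * f r

/-- The transformed (reduced confluent Heun) operator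
`𝒯̃_x = (x−2M)(x−M) d²/dx² + [(2α+1)(x−M) + (1−2s)(x−2M)] d/dx
  + (α(1−2s) − 2s − L) + (4βγ/M)(x−M)`. -/
def TtildeHeun (M s : ℝ) (α β γ L : ℂ) (f : ℝ → ℂ) (x : ℝ) : ℂ :=
  ((x : ℂ) - 2 * (M : ℂ)) * ((x : ℂ) - (M : ℂ)) * deriv (deriv f) x
    + ((2 * α + 1) * ((x : ℂ) - (M : ℂ)) + (1 - 2 * (s : ℂ)) * ((x : ℂ) - 2 * (M : ℂ))) *
      deriv f x
    + (α * (1 - 2 * (s : ℂ)) - 2 * (s : ℂ) - L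
        + 4 * β * γ / (M : ℂ) * ((x : ℂ) - (M : ℂ))) * f x

lemma hasDerivAt_exp_lin (c m : ℂ) (t : ℝ) :
    HasDerivAt (fun t : ℝ => Complex.exp (c * ((t : ℂ) - m)))
      (c * Complex.exp (c * ((t : ℂ) - m))) t := by
  have h1 : HasDerivAt (fun t : ℝ => c * ((t : ℂ) - m)) c t := by
    simpa using ((Complex.ofRealCLM.hasDerivAt (x := t)).sub_const m).const_mul c
  simpa [mul_comm] using h1.cexp

lemma deriv_exp_lin (c m : ℂ) :
    deriv (fun t : ℝ => Complex.exp (c * ((t : ℂ) - m)))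
      = fun t : ℝ => c * Complex.exp (c * ((t : ℂ) - m)) := by
  funext t
  exact (hasDerivAt_exp_lin c m t).deriv

lemma deriv_const_mul_exp_lin (a c m : ℂ) :
    deriv (fun t : ℝ => a * Complex.exp (c * ((t : ℂ) - m)))
      = fun t : ℝ => a * c * Complex.exp (c * ((t : ℂ) - m)) := by
  funext t
  have := ((hasDerivAt_exp_lin c m t).const_mul a).deriv
  rw [this]; ring

/-- **Intertwining identity for the extremal integral-transform kernel**: with
`A = −2γ/M`, the kernel `K(x, r) = exp(A(x−M)(r−M))` satisfies
`𝒯̃_x K(x, r) = 𝒯_r K(x, r)` for all real `x`, `r`. -/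
theorem kernel_intertwining_extremal
    (M : ℝ) (hM : 0 < M) (s : ℝ) (α β γ L : ℂ) :
    ∀ x r : ℝ,
      TtildeHeun M s α β γ L
          (fun x' : ℝ => Complex.exp (-2 * γ / (M : ℂ) * ((x' : ℂ) - (M : ℂ)) * ((r : ℂ) - (M : ℂ)))) x
        = THeun M s α β γ L
            (fun r' : ℝ => Complex.exp (-2 * γ / (M : ℂ) * ((x : ℂ) - (M : ℂ)) * ((r' : ℂ) - (M : ℂ)))) r := by
  intro x r
  have hM0 : (M : ℂ) ≠ 0 := by exact_mod_cast hM.ne'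
  set c₁ : ℂ := -2 * γ / (M : ℂ) * ((r : ℂ) - (M : ℂ)) with hc₁
  set c₂ : ℂ := -2 * γ / (M : ℂ) * ((x : ℂ) - (M : ℂ)) with hc₂
  have e₁ : (fun x' : ℝ => Complex.exp (-2 * γ / (M : ℂ) * ((x' : ℂ) - (M : ℂ)) * ((r : ℂ) - (M : ℂ))))
      = fun x' : ℝ => Complex.exp (c₁ * ((x' : ℂ) - (M : ℂ))) := by
    funext x'; rw [hc₁]; ring_nf
  have e₂ : (fun r' : ℝ => Complex.exp (-2 * γ / (M : ℂ) * ((x : ℂ) - (M : ℂ)) * ((r' : ℂ) - (M : ℂ))))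
      = fun r' : ℝ => Complex.exp (c₂ * ((r' : ℂ) - (M : ℂ))) := by
    funext r'; rw [hc₂]
  rw [e₁, e₂]
  simp only [THeun, TtildeHeun, deriv_exp_lin, deriv_const_mul_exp_lin]
  have hx : Complex.exp (c₁ * ((x : ℂ) - (M : ℂ))) = Complex.exp (c₂ * ((r : ℂ) - (M : ℂ))) := by
    rw [hc₁, hc₂]; ring_nf
  rw [hx, hc₁, hc₂]
  field_simp
  ring
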